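/- For every integer k ≥ 1, there exist Boolean functions f and g of arity 4k (given explicitly by λ_a and λ_b for the words a = (0100)^k 0 and b = (0001)^k 0) such that Alt(f) = Alt(g) = 2k, f(0,…,0) = f(1,…,1) = g(0,…,0) = g(1,…,1) = 0, but Alt(f ∨ g) = 4k. In particular, the class of Boolean functions with alternation number at most 2k, preserving 0 at 0 and 0 at 1, is not stable under pointwise join. -/

import Mathlib

/-- The alternation number of a Boolean function `f`: the length of the longest
chain in `({0,1}ⁿ, ≤)` along which the value of `f` alternates. -/
noncomputable def altNum {n : ℕ} (f : (Fin n → Bool) → Bool) : ℕ :=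
  sSup { d | ∃ a : Fin (d + 1) → (Fin n → Bool),
    StrictMono a ∧ ∀ i : Fin d, f (a i.castSucc) ≠ f (a i.succ) }

/-- The Hamming weight of a Boolean tuple. -/
def hammingWt {m : ℕ} (x : Fin m → Bool) : ℕ :=
  (Finset.univ.filter fun i => x i = true).card

theorem hammingWt_le {m : ℕ} (x : Fin m → Bool) : hammingWt x ≤ m :=
  (Finset.card_filter_le _ _).trans (by simp)

/-- The Boolean function `λ_c` determined by a word `c = c₀c₁⋯c_m`:
`λ_c(x) = c_{w(x)}` where `w(x)` is the Hamming weight of `x`. -/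
def lamWord {m : ℕ} (c : Fin (m + 1) → Bool) : (Fin m → Bool) → Bool :=
  fun x => c ⟨hammingWt x, Nat.lt_succ_of_le (hammingWt_le x)⟩

lemma hammingWt_lt_of_lt {n : ℕ} {x y : Fin n → Bool} (h : x < y) :
    hammingWt x < hammingWt y := by
  obtain ⟨hle, hne⟩ := lt_iff_le_and_ne.mp h
  apply Finset.card_lt_card
  rw [Finset.ssubset_iff_of_subset]
  · obtain ⟨j, hj⟩ := Function.ne_iff.mp hne
    refine ⟨j, ?_, ?_⟩ <;> simp only [Finset.mem_filter, Finset.mem_univ, true_and]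
    · have := hle j; revert hj this; cases x j <;> cases y j <;> simp
    · have := hle j; revert hj this; cases x j <;> cases y j <;> simp
  · intro j hj
    simp only [Finset.mem_filter, Finset.mem_univ, true_and] at *
    exact Bool.le_iff_imp.mp (hle j) hj

lemma hammingWt_threshold {n w : ℕ} (hw : w ≤ n) :
    hammingWt (fun j : Fin n => decide ((j : ℕ) < w)) = w := by
  unfold hammingWt
  have : (Finset.univ.filter fun j : Fin n => (decide ((j : ℕ) < w)) = true)
      = Finset.map (Fin.castLEEmb hw) Finset.univ := by
    ext j
    simp only [Finset.mem_filter, Finset.mem_univ, true_and, Finset.mem_map,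
      decide_eq_true_eq]
    constructor
    · intro h; exact ⟨⟨j, h⟩, by simp [Fin.castLEEmb, Fin.castLE, Fin.ext_iff]⟩
    · rintro ⟨i, -, rfl⟩
      simp [Fin.castLEEmb, Fin.castLE]
  rw [this]; simp

lemma altNum_eq {n : ℕ} (F : (Fin n → Bool) → Bool) (C : ℕ → Bool)
    (hval : ∀ x, F x = C (hammingWt x))
    (N : ℕ → ℕ) (hmono : ∀ a b : ℕ, a ≤ b → N a ≤ N b)
    (hstep : ∀ a b : ℕ, a < b → C a ≠ C b → N a < N b)
    (v : ℕ) (hv : N n = v)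
    (w : Fin (v + 1) → ℕ) (hw : StrictMono w) (hwle : ∀ i, w i ≤ n)
    (halt : ∀ i : Fin v, C (w i.castSucc) ≠ C (w i.succ)) :
    altNum F = v := by
  have hub : ∀ d ∈ { d | ∃ a : Fin (d + 1) → (Fin n → Bool),
      StrictMono a ∧ ∀ i : Fin d, F (a i.castSucc) ≠ F (a i.succ) }, d ≤ v := by
    rintro d ⟨a, ha, halt'⟩
    have hWmono : StrictMono (fun i : Fin (d+1) => hammingWt (a i)) :=
      fun i j hij => hammingWt_lt_of_lt (ha hij)
    have key : ∀ j : ℕ, ∀ h : j < d + 1, j ≤ N (hammingWt (a ⟨j, h⟩)) := by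
      intro j
      induction j with
      | zero => intro h; exact Nat.zero_le _
      | succ j ih =>
        intro h
        have hj : j < d + 1 := Nat.lt_of_succ_lt h
        have hjd : j < d := Nat.lt_of_succ_lt_succ h
        have h1 := halt' ⟨j, hjd⟩
        rw [hval, hval] at h1
        have hcast : ((⟨j, hjd⟩ : Fin d).castSucc) = (⟨j, hj⟩ : Fin (d+1)) := rfl
        have hsucc : ((⟨j, hjd⟩ : Fin d).succ) = (⟨j+1, h⟩ : Fin (d+1)) := rfl
        rw [hcast, hsucc] at h1
        have hlt : hammingWt (a ⟨j, hj⟩) < hammingWt (a ⟨j+1, h⟩) :=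
          hWmono (show (⟨j, hj⟩ : Fin (d+1)) < ⟨j+1, h⟩ by simp [Fin.lt_def])
        have := hstep _ _ hlt h1
        exact Nat.succ_le_of_lt (lt_of_le_of_lt (ih hj) this)
    have h1 := key d (Nat.lt_succ_self d)
    calc d ≤ N (hammingWt (a ⟨d, Nat.lt_succ_self d⟩)) := h1
      _ ≤ N n := hmono _ _ (hammingWt_le _)
      _ = v := hv
  have hmem : v ∈ { d | ∃ a : Fin (d + 1) → (Fin n → Bool),
      StrictMono a ∧ ∀ i : Fin d, F (a i.castSucc) ≠ F (a i.succ) } := by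
    refine ⟨fun i => fun j : Fin n => decide ((j : ℕ) < w i), ?_, ?_⟩
    · intro i i' hii
      have hww := hw hii
      refine lt_of_le_of_ne ?_ ?_
      · intro j
        by_cases hj : (j : ℕ) < w i
        · simp [hj, hj.trans hww]
        · simp [hj]
      · intro heq
        have hwi : w i < n := lt_of_lt_of_le hww (hwle i')
        have := congrFun heq ⟨w i, hwi⟩
        simp [hww] at this
    · intro i
      rw [hval, hval, hammingWt_threshold (hwle _), hammingWt_threshold (hwle _)]
      exact halt i
  have h0 : (0 : ℕ) ∈ { d | ∃ a : Fin (d + 1) → (Fin n → Bool),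
      StrictMono a ∧ ∀ i : Fin d, F (a i.castSucc) ≠ F (a i.succ) } :=
    ⟨fun _ => fun _ => false, fun i j hij => absurd (Fin.lt_def.mp hij) (by omega),
      fun i => i.elim0⟩
  exact le_antisymm (csSup_le ⟨0, h0⟩ hub) (le_csSup ⟨v, hub⟩ hmem)

lemma hammingWt_false {n : ℕ} : hammingWt (fun _ : Fin n => false) = 0 := by
  unfold hammingWt; simp

lemma hammingWt_true {n : ℕ} : hammingWt (fun _ : Fin n => true) = n := by
  unfold hammingWt; simp

/-- For every `k ≥ 1` there are Boolean functions `f = λ_{(0100)^k 0}` and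
`g = λ_{(0001)^k 0}` of arity `4k` with `Alt f = Alt g = 2k`, vanishing at `0`
and at `1`, whose pointwise join has alternation number `4k`.  In particular the
class of functions with alternation number at most `2k` and value `0` at both
constant tuples is not stable under pointwise join. -/
theorem stmt16 (k : ℕ) (hk : 1 ≤ k) :
    ∃ f g : (Fin (4 * k) → Bool) → Bool,
      f = lamWord (fun i : Fin (4 * k + 1) => decide ((i : ℕ) % 4 = 1)) ∧
      g = lamWord (fun i : Fin (4 * k + 1) => decide ((i : ℕ) % 4 = 3)) ∧
      altNum f = 2 * k ∧ altNum g = 2 * k ∧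
      f (fun _ => false) = false ∧ f (fun _ => true) = false ∧
      g (fun _ => false) = false ∧ g (fun _ => true) = false ∧
      altNum (fun x => f x || g x) = 4 * k ∧
      ¬ altNum (fun x => f x || g x) ≤ 2 * k := by
  have hf : altNum (lamWord (fun i : Fin (4*k+1) => decide ((i : ℕ) % 4 = 1))) = 2*k := by
    refine altNum_eq _ (fun a => decide (a % 4 = 1)) (fun x => rfl)
      (fun p => (p+3)/4 + (p+2)/4) (fun a b h => by omega)
      (fun a b hab hne => by
        rw [ne_eq, decide_eq_decide] at hne; omega)
      (2*k) (by omega)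
      (fun i => 2*(i:ℕ) + (i:ℕ)%2 - 2)
      (fun i j hij => by have := Fin.lt_def.mp hij; simp only []; omega)
      (fun i => by have := i.isLt; omega) ?_
    intro i
    rw [ne_eq, decide_eq_decide]
    simp only [Fin.coe_castSucc, Fin.val_succ]
    obtain ⟨j, hj | hj⟩ := Nat.even_or_odd' (i : ℕ) <;> rw [hj] <;> omega
  have hg : altNum (lamWord (fun i : Fin (4*k+1) => decide ((i : ℕ) % 4 = 3))) = 2*k := by
    refine altNum_eq _ (fun a => decide (a % 4 = 3)) (fun x => rfl)
      (fun p => (p+1)/4 + p/4) (fun a b h => by omega)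
      (fun a b hab hne => by
        rw [ne_eq, decide_eq_decide] at hne; omega)
      (2*k) (by omega)
      (fun i => 2*(i:ℕ) + (i:ℕ)%2)
      (fun i j hij => by have := Fin.lt_def.mp hij; simp only []; omega)
      (fun i => by have := i.isLt; omega) ?_
    intro i
    rw [ne_eq, decide_eq_decide]
    simp only [Fin.coe_castSucc, Fin.val_succ]
    obtain ⟨j, hj | hj⟩ := Nat.even_or_odd' (i : ℕ) <;> rw [hj] <;> omega
  have hfg : altNum (fun x : Fin (4*k) → Bool =>
      lamWord (fun i : Fin (4*k+1) => decide ((i : ℕ) % 4 = 1)) x ||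
      lamWord (fun i : Fin (4*k+1) => decide ((i : ℕ) % 4 = 3)) x) = 4*k := by
    refine altNum_eq _ (fun a => decide (a % 2 = 1))
      (fun x => by
        show (decide (hammingWt x % 4 = 1) || decide (hammingWt x % 4 = 3))
          = decide (hammingWt x % 2 = 1)
        by_cases h1 : hammingWt x % 4 = 1 <;> by_cases h2 : hammingWt x % 4 = 3 <;>
          simp [h1, h2] <;> omega)
      (fun p => p) (fun a b h => h)
      (fun a b hab _ => hab)
      (4*k) rfl
      (fun i => (i:ℕ))
      (fun i j hij => Fin.lt_def.mp hij)
      (fun i => by have := i.isLt; omega) ?_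
    intro i
    rw [ne_eq, decide_eq_decide]
    simp only [Fin.coe_castSucc, Fin.val_succ]
    omega
  refine ⟨_, _, rfl, rfl, hf, hg, ?_, ?_, ?_, ?_, hfg, by rw [hfg]; omega⟩
  · unfold lamWord; simp [hammingWt_false]
  · unfold lamWord; simp [hammingWt_true]
  · unfold lamWord; simp [hammingWt_false]
  · unfold lamWord; simp [hammingWt_true]
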